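/- Let X = Σᵢ aᵢ ∂/∂xᵢ and Y = Σᵢ bᵢ ∂/∂xᵢ be formal vector fields on ℂⁿ (derivations of ℂ[[x₁,…,xₙ]]) with all aᵢ ∈ m² (i.e. X has vanishing linear part at the origin) and all bᵢ ∈ m. Let c ∈ ℂ with c ≠ 0. If ⁅X, Y⁆ = c • Y, then Y = 0. -/

import Mathlib

open MvPowerSeries

/-- The ideal of formal power series with zero constant term (the maximal ideal). -/
noncomputable def mIdeal (n : ℕ) : Ideal (MvPowerSeries (Fin n) ℂ) :=
  RingHom.ker (MvPowerSeries.constantCoeff (σ := Fin n) (R := ℂ))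

/-- Formal partial derivative `∂/∂xᵢ` on `ℂ[[x₁,…,xₙ]]`. -/
noncomputable def pderivPS {n : ℕ} (i : Fin n) (f : MvPowerSeries (Fin n) ℂ) :
    MvPowerSeries (Fin n) ℂ :=
  fun m => ((m i + 1 : ℕ) : ℂ) * MvPowerSeries.coeff (R := ℂ) (m + Finsupp.single i 1) f

/-- The `i`-th coefficient of the commutator `[X, Y]` of the formal vector fields
`X = Σ aⱼ ∂/∂xⱼ` and `Y = Σ bⱼ ∂/∂xⱼ`. -/
noncomputable def bracketCoeff {n : ℕ} (a b : Fin n → MvPowerSeries (Fin n) ℂ)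
    (i : Fin n) : MvPowerSeries (Fin n) ℂ :=
  ∑ j : Fin n, (a j * pderivPS j (b i) - b j * pderivPS j (a i))

private def degF {n : ℕ} (m : Fin n →₀ ℕ) : ℕ := m.sum fun _ e => e

private lemma degF_add {n : ℕ} (p q : Fin n →₀ ℕ) : degF (p + q) = degF p + degF q :=
  Finsupp.sum_add_index' (fun _ => rfl) (fun _ _ _ => rfl)

private lemma degF_single {n : ℕ} (j : Fin n) : degF (Finsupp.single j 1) = 1 := by
  simp [degF, Finsupp.sum_single_index]

private lemma degF_eq_zero {n : ℕ} {p : Fin n →₀ ℕ} (h : degF p = 0) : p = 0 := by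
  ext i
  by_cases hi : i ∈ p.support
  · exact Finset.sum_eq_zero_iff.mp h i hi
  · simpa using Finsupp.notMem_support_iff.mp hi

private lemma coeff_pderivPS {n : ℕ} (i : Fin n) (f : MvPowerSeries (Fin n) ℂ)
    (m : Fin n →₀ ℕ) :
    MvPowerSeries.coeff (R := ℂ) m (pderivPS i f) =
      ((m i + 1 : ℕ) : ℂ) * MvPowerSeries.coeff (R := ℂ) (m + Finsupp.single i 1) f := rfl

private lemma coeff_eq_zero_of_mem_sq {n : ℕ} {f : MvPowerSeries (Fin n) ℂ}
    (hf : f ∈ (mIdeal n) ^ 2) {m : Fin n →₀ ℕ} (hm : degF m ≤ 1) :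
    MvPowerSeries.coeff (R := ℂ) m f = 0 := by
  rw [sq] at hf
  refine Submodule.mul_induction_on hf ?_ ?_
  · intro g hg h hh
    rw [MvPowerSeries.coeff_mul]
    refine Finset.sum_eq_zero fun p hp => ?_
    rw [Finset.HasAntidiagonal.mem_antidiagonal] at hp
    have hd : degF p.1 + degF p.2 ≤ 1 := by rw [← degF_add, hp]; exact hm
    have hg0 : MvPowerSeries.coeff (R := ℂ) 0 g = 0 := by
      rw [MvPowerSeries.coeff_zero_eq_constantCoeff]; exact RingHom.mem_ker.mp hg
    have hh0 : MvPowerSeries.coeff (R := ℂ) 0 h = 0 := by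
      rw [MvPowerSeries.coeff_zero_eq_constantCoeff]; exact RingHom.mem_ker.mp hh
    rcases Nat.eq_zero_or_pos (degF p.1) with h1 | h1
    · rw [degF_eq_zero h1, hg0, zero_mul]
    · have h2 : degF p.2 = 0 := by omega
      rw [degF_eq_zero h2, hh0, mul_zero]
  · intro x y hx hy
    rw [map_add, hx, hy, add_zero]

/-- If `X` has vanishing linear part at the origin (coefficients in `m²`), `Y`
vanishes at the origin (coefficients in `m`), `c ≠ 0`, and `[X, Y] = c • Y`,
then `Y = 0`. -/
theorem eq_zero_of_bracket_eq_smul {n : ℕ}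
    (A B : Fin n → MvPowerSeries (Fin n) ℂ)
    (hA : ∀ i, A i ∈ (mIdeal n) ^ 2) (hB : ∀ i, B i ∈ mIdeal n)
    (c : ℂ) (hc : c ≠ 0)
    (hrel : ∀ i, bracketCoeff A B i = c • B i) :
    ∀ i, B i = 0 := by
  have key : ∀ b : ℕ, ∀ i (m : Fin n →₀ ℕ), degF m < b →
      MvPowerSeries.coeff (R := ℂ) m (B i) = 0 := by
    intro b
    induction b with
    | zero => intro i m hm; omega
    | succ b ih =>
      intro i m hm
      by_cases hlt : degF m < b
      · exact ih i m hlt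
      have hdm : degF m = b := by omega
      have h1 : MvPowerSeries.coeff (R := ℂ) m (bracketCoeff A B i) =
          c * MvPowerSeries.coeff (R := ℂ) m (B i) := by
        rw [hrel i, map_smul, smul_eq_mul]
      have h2 : MvPowerSeries.coeff (R := ℂ) m (bracketCoeff A B i) = 0 := by
        unfold bracketCoeff
        rw [map_sum]
        refine Finset.sum_eq_zero fun j _ => ?_
        rw [map_sub, MvPowerSeries.coeff_mul, MvPowerSeries.coeff_mul]
        have t1 : ∀ p ∈ Finset.HasAntidiagonal.antidiagonal m,
            MvPowerSeries.coeff (R := ℂ) p.1 (A j) *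
              MvPowerSeries.coeff (R := ℂ) p.2 (pderivPS j (B i)) = 0 := by
          intro p hp
          rw [Finset.HasAntidiagonal.mem_antidiagonal] at hp
          have hd : degF p.1 + degF p.2 = b := by rw [← degF_add, hp, hdm]
          by_cases hdp : degF p.1 ≤ 1
          · rw [coeff_eq_zero_of_mem_sq (hA j) hdp, zero_mul]
          · have hq : degF (p.2 + Finsupp.single j 1) < b := by
              rw [degF_add, degF_single]; omega
            rw [coeff_pderivPS, ih i _ hq, mul_zero, mul_zero]
        have t2 : ∀ p ∈ Finset.HasAntidiagonal.antidiagonal m,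
            MvPowerSeries.coeff (R := ℂ) p.1 (B j) *
              MvPowerSeries.coeff (R := ℂ) p.2 (pderivPS j (A i)) = 0 := by
          intro p hp
          rw [Finset.HasAntidiagonal.mem_antidiagonal] at hp
          have hd : degF p.1 + degF p.2 = b := by rw [← degF_add, hp, hdm]
          by_cases hdp : degF p.1 < b
          · rw [ih j _ hdp, zero_mul]
          · have hq : degF p.2 = 0 := by omega
            rw [degF_eq_zero hq] at *
            have : degF ((0 : Fin n →₀ ℕ) + Finsupp.single j 1) ≤ 1 := by
              rw [degF_add, degF_single]; simp [degF]
            rw [coeff_pderivPS, coeff_eq_zero_of_mem_sq (hA i) this, mul_zero, mul_zero]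
        rw [Finset.sum_eq_zero t1, Finset.sum_eq_zero t2, sub_zero]
      have := h1.symm.trans h2
      rcases mul_eq_zero.mp this with h | h
      · exact absurd h hc
      · exact h
  intro i
  ext m
  rw [map_zero]
  exact key (degF m + 1) i m (Nat.lt_succ_self _)
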